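/- Let ρ be a two-qubit state with geometric entanglement G(ρ) = sin²α, α ∈ [0, π/4], and let ρ' be any state with F(ρ,ρ') ≥ f = cos²k, k ∈ [0, π/2]. Then G(ρ') ≥ sin²(max{α − k, 0}). -/

import Mathlib

open Matrix
open scoped ComplexOrder Kronecker

noncomputable section

/-- A density operator: positive semidefinite with unit trace. -/
def IsDensity {d : Type*} [Fintype d] [DecidableEq d] (ρ : Matrix d d ℂ) : Prop :=
  ρ.PosSemidef ∧ ρ.trace = 1

open Classical in
/-- Square root of a positive semidefinite matrix (junk value `0` otherwise). -/
noncomputable def matSqrt {d : Type*} [Fintype d] [DecidableEq d] (A : Matrix d d ℂ) :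
    Matrix d d ℂ :=
  if h : A.PosSemidef then
    h.1.eigenvectorUnitary.1 * diagonal ((↑) ∘ (Real.sqrt ·) ∘ h.1.eigenvalues) *
      (star h.1.eigenvectorUnitary : Matrix d d ℂ)
  else 0

/-- Uhlmann fidelity `F(ρ,σ) = (Tr √(√ρ σ √ρ))²`. -/
noncomputable def fid {d : Type*} [Fintype d] [DecidableEq d] (ρ σ : Matrix d d ℂ) : ℝ :=
  ((matSqrt (matSqrt ρ * σ * matSqrt ρ)).trace.re) ^ 2

/-- Bures angle `D(ρ,σ) = arccos √F(ρ,σ)`. -/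
noncomputable def bures {d : Type*} [Fintype d] [DecidableEq d] (ρ σ : Matrix d d ℂ) : ℝ :=
  Real.arccos (Real.sqrt (fid ρ σ))

abbrev Q1 := Matrix (Fin 2) (Fin 2) ℂ
abbrev Q2 := Matrix (Fin 2 × Fin 2) (Fin 2 × Fin 2) ℂ

/-- Separable two-qubit states: convex combinations of product states. -/
def SepState (σ : Q2) : Prop :=
  ∃ (m : ℕ) (p : Fin m → ℝ) (a b : Fin m → Q1),
    (∀ i, 0 ≤ p i) ∧ (∑ i, p i) = 1 ∧ (∀ i, IsDensity (a i)) ∧ (∀ i, IsDensity (b i)) ∧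
    σ = ∑ i, p i • (a i ⊗ₖ b i)

/-- Geometric entanglement of a two-qubit state. -/
noncomputable def G2 (ρ : Q2) : ℝ := 1 - sSup {x : ℝ | ∃ σ, SepState σ ∧ x = fid ρ σ}

set_option linter.unusedSectionVars false
namespace Matrix.PosSemidef

variable {n : Type*} [Fintype n] [DecidableEq n]

/-- Square root of a positive semidefinite matrix. -/
noncomputable def sqrt {A : Matrix n n ℂ} (hA : A.PosSemidef) : Matrix n n ℂ :=
  hA.1.eigenvectorUnitary.1 * diagonal ((↑) ∘ (Real.sqrt ·) ∘ hA.1.eigenvalues) *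
    (star hA.1.eigenvectorUnitary : Matrix n n ℂ)

lemma posSemidef_sqrt {A : Matrix n n ℂ} (hA : A.PosSemidef) : hA.sqrt.PosSemidef := by
  have hd : (diagonal ((↑) ∘ (Real.sqrt ·) ∘ hA.1.eigenvalues) : Matrix n n ℂ).PosSemidef :=
    posSemidef_diagonal_iff.mpr fun i => by simp [Real.sqrt_nonneg]
  have h := hd.mul_mul_conjTranspose_same (hA.1.eigenvectorUnitary : Matrix n n ℂ)
  rw [sqrt]
  convert h using 2
  exact Matrix.star_eq_conjTranspose _

lemma sqrt_mul_self {A : Matrix n n ℂ} (hA : A.PosSemidef) : hA.sqrt * hA.sqrt = A := by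
  rw [sqrt]
  set U := hA.1.eigenvectorUnitary
  set D : Matrix n n ℂ := diagonal ((↑) ∘ (Real.sqrt ·) ∘ hA.1.eigenvalues) with hD
  have hUU : (star U : Matrix n n ℂ) * (U : Matrix n n ℂ) = 1 := Unitary.coe_star_mul_self U
  have hdd : D * D = diagonal (RCLike.ofReal ∘ hA.1.eigenvalues) := by
    rw [hD, diagonal_mul_diagonal]
    congr 1
    funext i
    simp only [Function.comp_apply]
    rw [← Complex.ofReal_mul]
    exact congrArg Complex.ofReal (Real.mul_self_sqrt (hA.eigenvalues_nonneg i))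
  conv_rhs => rw [hA.1.spectral_theorem]
  rw [Unitary.conjStarAlgAut_apply]
  calc (U : Matrix n n ℂ) * D * (star U : Matrix n n ℂ) * ((U : Matrix n n ℂ) * D *
        (star U : Matrix n n ℂ))
      = (U : Matrix n n ℂ) * (D * ((star U : Matrix n n ℂ) * U) * D) *
        (star U : Matrix n n ℂ) := by simp only [Matrix.mul_assoc]
    _ = _ := by rw [hUU, Matrix.mul_one, hdd]

end Matrix.PosSemidef

namespace Helper

variable {n : Type*} [Fintype n] [DecidableEq n]

lemma herm_star_mul_self_mul_eq_diagonal {A : Matrix n n ℂ} (hA : A.IsHermitian) :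
    (star hA.eigenvectorUnitary : Matrix n n ℂ) * A * (hA.eigenvectorUnitary : Matrix n n ℂ)
      = diagonal ((↑) ∘ hA.eigenvalues) := by
  have := hA.conjStarAlgAut_star_eigenvectorUnitary
  rw [Unitary.conjStarAlgAut_apply, Unitary.coe_star, star_star] at this
  exact this

lemma matSqrt_of_posSemidef {A : Matrix n n ℂ} (hA : A.PosSemidef) :
    matSqrt A = hA.sqrt := by
  rw [matSqrt, dif_pos hA]; rfl

lemma matSqrt_posSemidef {A : Matrix n n ℂ} (hA : A.PosSemidef) :
    (matSqrt A).PosSemidef := by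
  rw [matSqrt_of_posSemidef hA]; exact hA.posSemidef_sqrt

lemma matSqrt_mul_self {A : Matrix n n ℂ} (hA : A.PosSemidef) :
    matSqrt A * matSqrt A = A := by
  rw [matSqrt_of_posSemidef hA]; exact hA.sqrt_mul_self

lemma matSqrt_herm {A : Matrix n n ℂ} (hA : A.PosSemidef) :
    (matSqrt A)ᴴ = matSqrt A := (matSqrt_posSemidef hA).1

/-- Trace norm of a square complex matrix. -/
noncomputable def tn (M : Matrix n n ℂ) : ℝ := ((matSqrt (Mᴴ * M)).trace).re

lemma tn_eq_sum_sqrt (M : Matrix n n ℂ) :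
    tn M = ∑ i, Real.sqrt ((posSemidef_conjTranspose_mul_self M).1.eigenvalues i) := by
  set h := posSemidef_conjTranspose_mul_self M
  set U : Matrix n n ℂ := (h.1.eigenvectorUnitary : Matrix n n ℂ) with hUdef
  have hU : U ∈ Matrix.unitaryGroup n ℂ := h.1.eigenvectorUnitary.2
  rw [tn, matSqrt_of_posSemidef h, Matrix.PosSemidef.sqrt]
  rw [Matrix.trace_mul_cycle]
  rw [(Matrix.mem_unitaryGroup_iff'.mp hU : star U * U = 1), Matrix.one_mul,
    Matrix.trace_diagonal]
  simp [Complex.ofReal_re]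

lemma tn_nonneg (M : Matrix n n ℂ) : 0 ≤ tn M := by
  rw [tn_eq_sum_sqrt]
  exact Finset.sum_nonneg fun i _ => Real.sqrt_nonneg _


/-- Cauchy–Schwarz for complex sums. -/
lemma abs_sum_mul_le (f g : n → ℂ) :
    ‖∑ k, f k * g k‖ ≤ Real.sqrt (∑ k, ‖f k‖^2) * Real.sqrt (∑ k, ‖g k‖^2) := by
  classical
  let x : EuclideanSpace ℂ n := (WithLp.equiv 2 _).symm (fun k => (starRingEnd ℂ) (f k))
  let y : EuclideanSpace ℂ n := (WithLp.equiv 2 _).symm g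
  have hinner : (inner ℂ x y) = ∑ k, f k * g k := by
    rw [PiLp.inner_apply]
    congr 1; funext k
    simp [x, y, RCLike.inner_apply, mul_comm]
  have hx : ‖x‖ = Real.sqrt (∑ k, ‖f k‖^2) := by
    rw [EuclideanSpace.norm_eq]
    congr 1; apply Finset.sum_congr rfl; intro k _; simp [x]
  have hy : ‖y‖ = Real.sqrt (∑ k, ‖g k‖^2) := by
    rw [EuclideanSpace.norm_eq]
    congr 1
  calc ‖∑ k, f k * g k‖ = ‖(inner ℂ x y)‖ := by rw [hinner]
    _ ≤ ‖x‖ * ‖y‖ := norm_inner_le_norm x y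
    _ = _ := by rw [hx, hy]


lemma row_norm_one {W : Matrix n n ℂ} (hW : W ∈ Matrix.unitaryGroup n ℂ) (i : n) :
    ∑ k, ‖W i k‖^2 = 1 := by
  have h1 : (W * star W) i i = 1 := by
    rw [Matrix.mem_unitaryGroup_iff.mp hW]; simp
  have h2 : (W * star W) i i = ∑ k, (‖W i k‖^2 : ℂ) := by
    rw [Matrix.mul_apply]
    apply Finset.sum_congr rfl; intro k _
    simp [Matrix.star_apply, Complex.mul_conj, Complex.normSq_eq_norm_sq]
  rw [h2] at h1
  exact_mod_cast h1

lemma col_norm {N : Matrix n n ℂ} {lam : n → ℝ}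
    (hN : Nᴴ * N = Matrix.diagonal ((↑) ∘ lam)) (k : n) :
    ∑ x, ‖N x k‖^2 = lam k := by
  have h2 : (Nᴴ * N) k k = ∑ x, (‖N x k‖^2 : ℂ) := by
    rw [Matrix.mul_apply]
    apply Finset.sum_congr rfl; intro x _
    simp [Matrix.conjTranspose_apply, Complex.normSq_eq_norm_sq, mul_comm, Complex.mul_conj]
  rw [hN] at h2
  simp only [Matrix.diagonal_apply_eq, Function.comp_apply] at h2
  exact_mod_cast h2.symm

/-- Upper bound: real part of `tr (M V)` for unitary `V` is at most the trace norm. -/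
lemma re_trace_mul_le_tn (M : Matrix n n ℂ) {V : Matrix n n ℂ}
    (hV : V ∈ Matrix.unitaryGroup n ℂ) : ‖Matrix.trace (M * V)‖ ≤ tn M := by
  set h := posSemidef_conjTranspose_mul_self M
  set U : Matrix n n ℂ := (h.1.eigenvectorUnitary : Matrix n n ℂ) with hUdef
  have hU : U ∈ Matrix.unitaryGroup n ℂ := h.1.eigenvectorUnitary.2
  set N : Matrix n n ℂ := M * U with hNdef
  have hN : Nᴴ * N = Matrix.diagonal ((↑) ∘ h.1.eigenvalues) := by
    rw [hNdef, Matrix.conjTranspose_mul, ← Matrix.star_eq_conjTranspose U]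
    calc star U * Mᴴ * (M * U) = star U * (Mᴴ * M) * U := by
          simp only [Matrix.mul_assoc]
      _ = _ := herm_star_mul_self_mul_eq_diagonal h.1
  set W : Matrix n n ℂ := star U * V with hWdef
  have hWu : W ∈ Matrix.unitaryGroup n ℂ := by
    exact Submonoid.mul_mem _ (Unitary.star_mem hU) hV
  have hMV : M * V = N * W := by
    rw [hNdef, hWdef, Matrix.mul_assoc, ← Matrix.mul_assoc U,
      (Matrix.mem_unitaryGroup_iff.mp hU : U * star U = 1), Matrix.one_mul]
  rw [hMV, tn_eq_sum_sqrt]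
  have htr : Matrix.trace (N * W) = ∑ i, ∑ k, W i k * N k i := by
    rw [Matrix.trace_mul_comm, Matrix.trace]
    apply Finset.sum_congr rfl; intro i _
    rw [Matrix.diag_apply, Matrix.mul_apply]
  rw [htr]
  calc ‖∑ i, ∑ k, W i k * N k i‖ ≤ ∑ i, ‖∑ k, W i k * N k i‖ := norm_sum_le _ _
    _ ≤ ∑ i, Real.sqrt (h.1.eigenvalues i) := by
        apply Finset.sum_le_sum; intro i _
        calc ‖∑ k, W i k * N k i‖
            ≤ Real.sqrt (∑ k, ‖W i k‖^2) * Real.sqrt (∑ k, ‖N k i‖^2) :=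
              abs_sum_mul_le _ _
          _ = Real.sqrt (h.1.eigenvalues i) := by
              rw [row_norm_one hWu i, col_norm hN i]
              simp


lemma conj_mul_self (z : ℂ) : (starRingEnd ℂ) z * z = ((‖z‖^2 : ℝ) : ℂ) := by
  rw [mul_comm, Complex.mul_conj]
  norm_cast
  rw [Complex.normSq_eq_norm_sq]

/-- Attainment: some unitary achieves the trace norm. -/
lemma exists_unitary_trace_eq (M : Matrix n n ℂ) :
    ∃ V ∈ Matrix.unitaryGroup n ℂ, Matrix.trace (M * V) = (tn M : ℂ) := by
  classical
  set h := posSemidef_conjTranspose_mul_self M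
  set U : Matrix n n ℂ := (h.1.eigenvectorUnitary : Matrix n n ℂ) with hUdef
  have hU : U ∈ Matrix.unitaryGroup n ℂ := h.1.eigenvectorUnitary.2
  set lam : n → ℝ := h.1.eigenvalues with hlam
  set N : Matrix n n ℂ := M * U with hNdef
  have hN : Nᴴ * N = Matrix.diagonal ((↑) ∘ lam) := by
    rw [hNdef, Matrix.conjTranspose_mul, ← Matrix.star_eq_conjTranspose U]
    calc star U * Mᴴ * (M * U) = star U * (Mᴴ * M) * U := by
          simp only [Matrix.mul_assoc]
      _ = _ := herm_star_mul_self_mul_eq_diagonal h.1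
  have hlamnn : ∀ i, 0 ≤ lam i := h.eigenvalues_nonneg
  have hsqrtne : ∀ i : n, lam i ≠ 0 → (Real.sqrt (lam i) : ℂ) ≠ 0 := by
    intro i hi
    simp only [ne_eq, Complex.ofReal_eq_zero]
    exact Real.sqrt_ne_zero'.mpr (lt_of_le_of_ne (hlamnn i) (Ne.symm hi))
  -- inner products of columns of N
  have hcol : ∀ i j : n, (∑ x, (starRingEnd ℂ) (N x i) * N x j)
      = if i = j then (lam i : ℂ) else 0 := by
    intro i j
    have hrw : (Nᴴ * N) i j = ∑ x, (starRingEnd ℂ) (N x i) * N x j := by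
      rw [Matrix.mul_apply]
      apply Finset.sum_congr rfl; intro x _
      rw [Matrix.conjTranspose_apply]; rfl
    rw [hN] at hrw
    rw [← hrw, Matrix.diagonal_apply]
    split <;> simp_all
  -- normalized columns
  set v : n → EuclideanSpace ℂ n :=
    fun i => ((Real.sqrt (lam i) : ℂ))⁻¹ • ((WithLp.equiv 2 _).symm (fun x => N x i)) with hv
  set s : Set n := {i | lam i ≠ 0} with hs
  have hinner : ∀ i j : n, (inner ℂ (v i) (v j))
      = (starRingEnd ℂ) ((Real.sqrt (lam i) : ℂ))⁻¹ * (((Real.sqrt (lam j) : ℂ))⁻¹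
        * ∑ x, (starRingEnd ℂ) (N x i) * N x j) := by
    intro i j
    rw [hv]
    simp only [inner_smul_left, inner_smul_right, PiLp.inner_apply, RCLike.inner_apply,
      WithLp.equiv_symm_apply, WithLp.ofLp_toLp, Finset.mul_sum]
    apply Finset.sum_congr rfl; intro x _; ring
  have horth : Orthonormal ℂ (s.restrict v) := by
    rw [orthonormal_iff_ite]
    rintro ⟨i, hi⟩ ⟨j, hj⟩
    change inner ℂ (v i) (v j) = _
    rw [hinner i j, hcol i j]
    by_cases hij : i = j
    · subst hij
      simp only [if_pos rfl, Subtype.mk.injEq]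
      rw [map_inv₀, Complex.conj_ofReal]
      have h2 := hsqrtne i hi
      field_simp
      norm_cast
      simp [Real.sq_sqrt (hlamnn i)]
    · simp [hij, Subtype.ext_iff]
  have hcard : Module.finrank ℂ (EuclideanSpace ℂ n) = Fintype.card n := by
    simp [finrank_euclideanSpace]
  obtain ⟨b, hb⟩ := horth.exists_orthonormalBasis_extension_of_card_eq hcard
  set W : Matrix n n ℂ :=
    (EuclideanSpace.basisFun n ℂ).toBasis.toMatrix b.toBasis with hW
  have hWu : W ∈ Matrix.unitaryGroup n ℂ :=
    (EuclideanSpace.basisFun n ℂ).toMatrix_orthonormalBasis_mem_unitary b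
  have hWapp : ∀ x i, W x i = b i x := fun x i => rfl
  refine ⟨U * star W, Submonoid.mul_mem _ hU (Unitary.star_mem hWu), ?_⟩
  have hMW : M * (U * star W) = N * star W := by rw [hNdef, Matrix.mul_assoc]
  rw [hMW, Matrix.trace_mul_comm, tn_eq_sum_sqrt]
  have htr : Matrix.trace (star W * N) = ∑ i, ∑ x, (starRingEnd ℂ) (W x i) * N x i := by
    rw [Matrix.trace]
    apply Finset.sum_congr rfl; intro i _
    rw [Matrix.diag_apply, Matrix.mul_apply]
    apply Finset.sum_congr rfl; intro x _
    rw [Matrix.star_apply]; rfl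
  rw [htr, Complex.ofReal_sum]
  apply Finset.sum_congr rfl
  intro i _
  by_cases hi : lam i = 0
  · -- column is zero
    have hzero : ∀ x, N x i = 0 := by
      intro x
      have hc := hcol i i
      rw [if_pos rfl, hi] at hc
      simp only [conj_mul_self] at hc
      have hsum0 : ∑ x, ‖N x i‖^2 = 0 := by exact_mod_cast hc
      have hx := (Finset.sum_eq_zero_iff_of_nonneg
        (fun x _ => sq_nonneg ‖N x i‖)).mp hsum0 x (Finset.mem_univ x)
      exact norm_eq_zero.mp (pow_eq_zero_iff two_ne_zero |>.mp hx)
    rw [Finset.sum_eq_zero (fun x _ => by rw [hzero x, mul_zero])]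
    have : Real.sqrt (lam i) = 0 := by rw [hi, Real.sqrt_zero]
    rw [hlam] at this
    rw [this]
    simp
  · -- b i = v i
    have hbi : b i = v i := hb i hi
    have hWv : ∀ x, W x i = ((Real.sqrt (lam i) : ℂ))⁻¹ * N x i := by
      intro x
      rw [hWapp, hbi, hv]
      rfl
    have hdiag : ∑ x, (starRingEnd ℂ) (N x i) * N x i = (lam i : ℂ) := by
      have := hcol i i; rwa [if_pos rfl] at this
    have h2 := hsqrtne i hi
    calc ∑ x, (starRingEnd ℂ) (W x i) * N x i
        = ((Real.sqrt (lam i) : ℂ))⁻¹ * ∑ x, (starRingEnd ℂ) (N x i) * N x i := by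
          rw [Finset.mul_sum]
          apply Finset.sum_congr rfl; intro x _
          rw [hWv x, RingHom.map_mul, map_inv₀, Complex.conj_ofReal]; ring
      _ = ((Real.sqrt (lam i) : ℂ))⁻¹ * (lam i : ℂ) := by rw [hdiag]
      _ = ((Real.sqrt (lam i) : ℝ) : ℂ) := by
          field_simp
          norm_cast
          rw [Real.sq_sqrt (hlamnn i)]


lemma tn_conjTranspose (M : Matrix n n ℂ) : tn Mᴴ = tn M := by
  have key : ∀ A : Matrix n n ℂ, tn Aᴴ ≤ tn A := by
    intro A
    obtain ⟨V, hV, hVeq⟩ := exists_unitary_trace_eq Aᴴ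
    have h1 : Matrix.trace (Aᴴ * V) = (starRingEnd ℂ) (Matrix.trace (A * star V)) := by
      rw [Matrix.trace_mul_comm]
      have hct : (A * star V)ᴴ = V * Aᴴ := by
        rw [Matrix.conjTranspose_mul, Matrix.star_eq_conjTranspose,
          Matrix.conjTranspose_conjTranspose]
      rw [← hct, Matrix.trace_conjTranspose]
      rfl
    have h2 : ‖Matrix.trace (A * star V)‖ ≤ tn A :=
      re_trace_mul_le_tn A (Unitary.star_mem hV)
    have h3 : tn Aᴴ = ‖Matrix.trace (Aᴴ * V)‖ := by
      rw [hVeq]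
      simp [abs_of_nonneg (tn_nonneg Aᴴ)]
    rw [h3, h1]
    simpa using h2
  exact le_antisymm (key M) (by simpa using key Mᴴ)

/-- Embedding of matrices into Euclidean space. -/
noncomputable def toE (A : Matrix n n ℂ) : EuclideanSpace ℂ (n × n) :=
  (WithLp.equiv 2 _).symm (fun p => A p.1 p.2)

lemma inner_toE (A B : Matrix n n ℂ) :
    (inner ℂ (toE A) (toE B)) = Matrix.trace (Aᴴ * B) := by
  rw [toE, toE, PiLp.inner_apply, Matrix.trace]
  have hRHS : ∑ i, (Aᴴ * B).diag i = ∑ j : n, ∑ x : n, (starRingEnd ℂ) (A x j) * B x j := by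
    apply Finset.sum_congr rfl; intro j _
    rw [Matrix.diag_apply, Matrix.mul_apply]
    apply Finset.sum_congr rfl; intro x _
    rw [Matrix.conjTranspose_apply]; rfl
  rw [hRHS, Finset.sum_comm, Fintype.sum_prod_type]
  apply Finset.sum_congr rfl; intro x _
  apply Finset.sum_congr rfl; intro y _
  simp [RCLike.inner_apply, WithLp.equiv_symm_apply, mul_comm]

lemma norm_toE_sq (A : Matrix n n ℂ) : (‖toE A‖:ℝ)^2 = (Matrix.trace (Aᴴ * A)).re := by
  have h := inner_toE A A
  have h2 : (inner ℂ (toE A) (toE A)) = ((‖toE A‖:ℝ)^2 : ℂ) := by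
    rw [inner_self_eq_norm_sq_to_K]
    norm_cast
  rw [h2] at h
  exact_mod_cast congrArg Complex.re h

lemma norm_toE_one {A : Matrix n n ℂ} (hA : (Matrix.trace (Aᴴ * A)).re = 1) :
    ‖toE A‖ = 1 := by
  have h := norm_toE_sq A
  rw [hA] at h
  nlinarith [norm_nonneg (toE A)]

/-- Key three-vector inner product inequality. -/
lemma key_inner {E : Type*} [NormedAddCommGroup E] [InnerProductSpace ℂ E]
    (u v w : E) (hu : ‖u‖ = 1) (hv : ‖v‖ = 1) (hw : ‖w‖ = 1)
    {c1 c2 : ℝ} (h1 : (inner ℂ w u) = (c1:ℂ)) (h2 : (inner ℂ w v) = (c2:ℂ)) :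
    c1 * c2 - Real.sqrt (1 - c1^2) * Real.sqrt (1 - c2^2) ≤ (inner ℂ u v).re := by
  have hww : (inner ℂ w w) = 1 := by
    rw [inner_self_eq_norm_sq_to_K, hw]; norm_num
  set p : E := u - (c1:ℂ) • w with hp
  set q : E := v - (c2:ℂ) • w with hq
  have hwp : (inner ℂ w p) = 0 := by
    rw [hp, inner_sub_right, inner_smul_right, h1, hww]; ring
  have hwq : (inner ℂ w q) = 0 := by
    rw [hq, inner_sub_right, inner_smul_right, h2, hww]; ring
  have hpw : (inner ℂ p w) = 0 := by
    rw [← inner_conj_symm, hwp]; simp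
  have hqw : (inner ℂ q w) = 0 := by
    rw [← inner_conj_symm, hwq]; simp
  have huw : (inner ℂ u w) = (c1:ℂ) := by
    rw [← inner_conj_symm, h1, Complex.conj_ofReal]
  have hvw : (inner ℂ v w) = (c2:ℂ) := by
    rw [← inner_conj_symm, h2, Complex.conj_ofReal]
  have huu : (inner ℂ u u) = 1 := by
    rw [inner_self_eq_norm_sq_to_K, hu]; norm_num
  have hvv : (inner ℂ v v) = 1 := by
    rw [inner_self_eq_norm_sq_to_K, hv]; norm_num
  have hpq : (inner ℂ p q) = inner ℂ u v - (c1:ℂ)*c2 := by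
    simp only [hp, hq, inner_sub_left, inner_sub_right, inner_smul_left, inner_smul_right,
      h1, h2, hww, huw, hvw, Complex.conj_ofReal]
    ring
  have hpp : (inner ℂ p p) = 1 - (c1:ℂ)^2 := by
    simp only [hp, inner_sub_left, inner_sub_right, inner_smul_left, inner_smul_right,
      h1, hww, huw, huu, Complex.conj_ofReal]
    ring
  have hqq : (inner ℂ q q) = 1 - (c2:ℂ)^2 := by
    simp only [hq, inner_sub_left, inner_sub_right, inner_smul_left, inner_smul_right,
      h2, hww, hvw, hvv, Complex.conj_ofReal]
    ring
  have hnp : ‖p‖ = Real.sqrt (1 - c1^2) := by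
    have h5 : ‖p‖^2 = 1 - c1^2 := by
      have h4 := hpp
      rw [inner_self_eq_norm_sq_to_K (𝕜 := ℂ)] at h4
      have h4' := congrArg Complex.re h4
      simp [← Complex.ofReal_pow, Complex.ofReal_re] at h4'
      exact h4' 
    rw [← h5, Real.sqrt_sq (norm_nonneg p)]
  have hnq : ‖q‖ = Real.sqrt (1 - c2^2) := by
    have h5 : ‖q‖^2 = 1 - c2^2 := by
      have h4 := hqq
      rw [inner_self_eq_norm_sq_to_K (𝕜 := ℂ)] at h4
      have h4' := congrArg Complex.re h4
      simp [← Complex.ofReal_pow, Complex.ofReal_re] at h4'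
      exact h4' 
    rw [← h5, Real.sqrt_sq (norm_nonneg q)]
  have habs : ‖(inner ℂ p q)‖ ≤ Real.sqrt (1-c1^2) * Real.sqrt (1-c2^2) := by
    rw [← hnp, ← hnq]; exact norm_inner_le_norm p q
  have hre : (inner ℂ u v).re = c1*c2 + (inner ℂ p q).re := by
    have h6 : (inner ℂ u v) = (c1:ℂ)*c2 + inner ℂ p q := by rw [hpq]; ring
    rw [h6]
    simp
  rw [hre]
  have h7 : -(‖(inner ℂ p q)‖) ≤ (inner ℂ p q).re := by
    have h8 := Complex.abs_re_le_norm (inner ℂ p q)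
    cases abs_le.mp h8 with
    | intro hl hr => linarith
  linarith


lemma fid_eq {ρ σ : Matrix n n ℂ} (hρ : ρ.PosSemidef) (hσ : σ.PosSemidef) :
    fid ρ σ = (tn (matSqrt σ * matSqrt ρ))^2 := by
  rw [fid, tn]
  congr 3
  rw [Matrix.conjTranspose_mul, matSqrt_herm hρ, matSqrt_herm hσ]
  simp only [← Matrix.mul_assoc]
  rw [Matrix.mul_assoc (matSqrt ρ) (matSqrt σ) (matSqrt σ), matSqrt_mul_self hσ]

lemma fid_nonneg (ρ σ : Matrix n n ℂ) : 0 ≤ fid ρ σ := sq_nonneg _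

lemma trace_conj_unitary {ρ V : Matrix n n ℂ} (hρ : ρ.PosSemidef)
    (hV : V ∈ Matrix.unitaryGroup n ℂ) :
    Matrix.trace ((matSqrt ρ * V)ᴴ * (matSqrt ρ * V)) = Matrix.trace ρ := by
  rw [Matrix.conjTranspose_mul, matSqrt_herm hρ]
  calc Matrix.trace (Vᴴ * matSqrt ρ * (matSqrt ρ * V))
      = Matrix.trace (Vᴴ * (ρ * V)) := by
        rw [Matrix.mul_assoc, ← Matrix.mul_assoc (matSqrt ρ), matSqrt_mul_self hρ]
    _ = Matrix.trace (ρ * (V * Vᴴ)) := by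
        rw [← Matrix.mul_assoc, Matrix.trace_mul_cycle, ← Matrix.mul_assoc,
          Matrix.trace_mul_comm, Matrix.mul_assoc]
    _ = Matrix.trace ρ := by
        rw [← Matrix.star_eq_conjTranspose, Matrix.mem_unitaryGroup_iff.mp hV, Matrix.mul_one]

lemma norm_toE_sqrt_unitary {ρ V : Matrix n n ℂ} (hρ : IsDensity ρ)
    (hV : V ∈ Matrix.unitaryGroup n ℂ) : ‖toE (matSqrt ρ * V)‖ = 1 := by
  apply norm_toE_one
  rw [trace_conj_unitary hρ.1 hV, hρ.2]
  rfl

lemma norm_toE_sqrt {ρ : Matrix n n ℂ} (hρ : IsDensity ρ) : ‖toE (matSqrt ρ)‖ = 1 := by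
  have := norm_toE_sqrt_unitary hρ (Submonoid.one_mem (Matrix.unitaryGroup n ℂ))
  rwa [Matrix.mul_one] at this

lemma tn_density_le_one {ρ σ : Matrix n n ℂ} (hρ : IsDensity ρ) (hσ : IsDensity σ) :
    tn (matSqrt σ * matSqrt ρ) ≤ 1 := by
  obtain ⟨V, hV, hVeq⟩ := exists_unitary_trace_eq (matSqrt σ * matSqrt ρ)
  have h1 : Matrix.trace (matSqrt σ * matSqrt ρ * V)
      = (inner ℂ (toE (matSqrt σ)) (toE (matSqrt ρ * V))) := by
    rw [inner_toE, matSqrt_herm hσ.1, Matrix.mul_assoc]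
  have h2 : ‖(inner ℂ (toE (matSqrt σ)) (toE (matSqrt ρ * V)))‖ ≤ 1 := by
    calc ‖(inner ℂ (toE (matSqrt σ)) (toE (matSqrt ρ * V)))‖
        ≤ ‖toE (matSqrt σ)‖ * ‖toE (matSqrt ρ * V)‖ := norm_inner_le_norm _ _
      _ = 1 := by rw [norm_toE_sqrt hσ, norm_toE_sqrt_unitary hρ hV, mul_one]
  have h3 : ‖Matrix.trace (matSqrt σ * matSqrt ρ * V)‖ ≤ 1 := h1 ▸ h2
  rw [hVeq] at h3
  calc tn (matSqrt σ * matSqrt ρ) ≤ |tn (matSqrt σ * matSqrt ρ)| := le_abs_self _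
    _ = ‖((tn (matSqrt σ * matSqrt ρ) : ℝ) : ℂ)‖ := by rw [Complex.norm_real]; rfl
    _ ≤ 1 := h3

lemma fid_le_one {ρ σ : Matrix n n ℂ} (hρ : IsDensity ρ) (hσ : IsDensity σ) :
    fid ρ σ ≤ 1 := by
  rw [fid_eq hρ.1 hσ.1]
  have h1 := tn_density_le_one hρ hσ
  have h2 := tn_nonneg (matSqrt σ * matSqrt ρ)
  nlinarith

lemma tn_eq_sqrt_fid {ρ σ : Matrix n n ℂ} (hρ : ρ.PosSemidef) (hσ : σ.PosSemidef) :
    tn (matSqrt σ * matSqrt ρ) = Real.sqrt (fid ρ σ) := by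
  rw [fid_eq hρ hσ, Real.sqrt_sq (tn_nonneg _)]

/-- Symmetry of the fidelity-related trace norm. -/
lemma tn_swap {ρ σ : Matrix n n ℂ} (hρ : ρ.PosSemidef) (hσ : σ.PosSemidef) :
    tn (matSqrt σ * matSqrt ρ) = tn (matSqrt ρ * matSqrt σ) := by
  rw [← tn_conjTranspose (matSqrt ρ * matSqrt σ), Matrix.conjTranspose_mul,
    matSqrt_herm hρ, matSqrt_herm hσ]

/-- Kronecker product of PSD matrices is PSD. -/
lemma kron_posSemidef {m l : Type*} [Fintype m] [DecidableEq m] [Fintype l] [DecidableEq l]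
    {A : Matrix m m ℂ} {B : Matrix l l ℂ} (hA : A.PosSemidef) (hB : B.PosSemidef) :
    (A ⊗ₖ B).PosSemidef := by
  exact hA.kronecker hB

lemma smul_posSemidef {A : Matrix n n ℂ} (hA : A.PosSemidef) {c : ℝ} (hc : 0 ≤ c) :
    (c • A).PosSemidef := by
  have hcoe : c • A = ((c : ℂ)) • A := by
    ext i j
    simp [Complex.real_smul]
  rw [hcoe]
  exact hA.smul (by exact_mod_cast hc)



lemma sep_isDensity {σ : Q2} (h : SepState σ) : IsDensity σ := by
  classical
  obtain ⟨m, p, a, b, hp, hsum, ha, hb, rfl⟩ := h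
  constructor
  · have hterm : ∀ i : Fin m, (p i • (a i ⊗ₖ b i)).PosSemidef :=
      fun i => smul_posSemidef (kron_posSemidef (ha i).1 (hb i).1) (hp i)
    refine Finset.sum_induction _ _ (fun x y hx hy => hx.add hy) Matrix.PosSemidef.zero
      (fun i _ => hterm i)
  · rw [Matrix.trace_sum]
    have hterm : ∀ i : Fin m, Matrix.trace (p i • (a i ⊗ₖ b i)) = ((p i : ℝ) : ℂ) := by
      intro i
      rw [Matrix.trace_smul, Matrix.trace_kronecker, (ha i).2, (hb i).2, mul_one]
      simp [Complex.real_smul]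
    rw [Finset.sum_congr rfl (fun i _ => hterm i), ← Complex.ofReal_sum, hsum]
    simp

set_option maxHeartbeats 1000000 in
open Real in
/-- The main pointwise bound: for any separable σ, `fid ρ' σ ≤ cos²(max (α−k) 0)`. -/
lemma main_bound (ρ ρ' : Q2) (hρ : IsDensity ρ) (hρ' : IsDensity ρ')
    (α k : ℝ) (hα0 : 0 ≤ α) (hα1 : α ≤ π / 4) (hk0 : 0 ≤ k) (hk1 : k ≤ π / 2)
    (hf : Real.cos k ^ 2 ≤ fid ρ ρ')
    {σ : Q2} (hσ : SepState σ) (hfρσ : fid ρ σ ≤ Real.cos α ^ 2) :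
    fid ρ' σ ≤ Real.cos (max (α - k) 0) ^ 2 := by
  have hσd : IsDensity σ := sep_isDensity hσ
  set c1 : ℝ := tn (matSqrt ρ' * matSqrt ρ) with hc1
  set t : ℝ := tn (matSqrt ρ' * matSqrt σ) with ht
  have hc1nn : 0 ≤ c1 := tn_nonneg _
  have htnn : 0 ≤ t := tn_nonneg _
  have hc1le : c1 ≤ 1 := tn_density_le_one hρ hρ'
  have htle : t ≤ 1 := tn_density_le_one hσd hρ'
  have hfid1 : fid ρ ρ' = c1^2 := fid_eq hρ.1 hρ'.1
  have hfid2 : fid ρ' σ = t^2 := by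
    rw [fid_eq hρ'.1 hσd.1, tn_swap hρ'.1 hσd.1]
  have hcosk : Real.cos k ≤ c1 := by
    have hck : 0 ≤ Real.cos k := Real.cos_nonneg_of_mem_Icc ⟨by linarith [Real.pi_pos], hk1⟩
    nlinarith [hf, hfid1]
  have hcosα0 : 0 ≤ Real.cos α := by
    apply Real.cos_nonneg_of_mem_Icc
    constructor <;> nlinarith [Real.pi_pos]
  -- the three-vector inequality
  obtain ⟨U, hU, hUeq⟩ := exists_unitary_trace_eq (matSqrt ρ' * matSqrt ρ)
  obtain ⟨V, hV, hVeq⟩ := exists_unitary_trace_eq (matSqrt ρ' * matSqrt σ)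
  set u := toE (matSqrt ρ * U) with hu
  set w := toE (matSqrt ρ') with hw
  set v := toE (matSqrt σ * V) with hv
  have h1 : (inner ℂ w u) = (c1 : ℂ) := by
    rw [hw, hu, inner_toE, matSqrt_herm hρ'.1, ← Matrix.mul_assoc]
    exact hUeq
  have h2 : (inner ℂ w v) = (t : ℂ) := by
    rw [hw, hv, inner_toE, matSqrt_herm hρ'.1, ← Matrix.mul_assoc]
    exact hVeq
  have hun : ‖u‖ = 1 := norm_toE_sqrt_unitary hρ hU
  have hvn : ‖v‖ = 1 := norm_toE_sqrt_unitary hσd hV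
  have hwn : ‖w‖ = 1 := norm_toE_sqrt hρ'
  have hkey := key_inner u v w hun hvn hwn h1 h2
  -- upper bound on re inner u v
  have hinner_uv : (inner ℂ u v)
      = Matrix.trace ((matSqrt ρ * matSqrt σ) * (V * star U)) := by
    rw [hu, hv, inner_toE, Matrix.conjTranspose_mul, matSqrt_herm hρ.1,
      ← Matrix.star_eq_conjTranspose U]
    rw [Matrix.mul_assoc, Matrix.trace_mul_comm]
    simp only [Matrix.mul_assoc]
  have hup : (inner ℂ u v).re ≤ Real.cos α := by
    have h3 : ‖Matrix.trace ((matSqrt ρ * matSqrt σ) * (V * star U))‖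
        ≤ tn (matSqrt ρ * matSqrt σ) :=
      re_trace_mul_le_tn _ (Submonoid.mul_mem _ hV (Unitary.star_mem hU))
    have h4 : tn (matSqrt ρ * matSqrt σ) ≤ Real.cos α := by
      rw [← tn_swap hρ.1 hσd.1, tn_eq_sqrt_fid hρ.1 hσd.1]
      calc Real.sqrt (fid ρ σ) ≤ Real.sqrt (Real.cos α ^ 2) := Real.sqrt_le_sqrt hfρσ
        _ = Real.cos α := by rw [Real.sqrt_sq hcosα0]
    calc (inner ℂ u v).re ≤ ‖(inner ℂ u v)‖ := Complex.re_le_norm _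
      _ = ‖Matrix.trace ((matSqrt ρ * matSqrt σ) * (V * star U))‖ := by rw [hinner_uv]
      _ ≤ Real.cos α := le_trans h3 h4
  have hmain : c1 * t - Real.sqrt (1 - c1^2) * Real.sqrt (1 - t^2) ≤ Real.cos α :=
    le_trans hkey hup
  -- trig endgame
  set a := Real.arccos c1 with ha
  set c := Real.arccos t with hc
  have hca : Real.cos a = c1 := Real.cos_arccos (by linarith) hc1le
  have hcc : Real.cos c = t := Real.cos_arccos (by linarith) htle
  have hsa : Real.sin a = Real.sqrt (1 - c1^2) := Real.sin_arccos c1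
  have hsc : Real.sin c = Real.sqrt (1 - t^2) := Real.sin_arccos t
  have ha0 : 0 ≤ a := Real.arccos_nonneg _
  have hc0 : 0 ≤ c := Real.arccos_nonneg _
  have hapi : a ≤ π/2 := Real.arccos_le_pi_div_two.mpr hc1nn
  have hcpi : c ≤ π/2 := Real.arccos_le_pi_div_two.mpr htnn
  have hak : a ≤ k := by
    calc a = Real.arccos c1 := rfl
      _ ≤ Real.arccos (Real.cos k) := by
          rcases eq_or_lt_of_le hcosk with heq | hlt
          · rw [heq]
          · exact le_of_lt (Real.strictAntiOn_arccos
              ⟨by linarith [Real.neg_one_le_cos k], by linarith⟩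
              ⟨by linarith, hc1le⟩ hlt)
      _ = k := Real.arccos_cos hk0 (by linarith [Real.pi_pos])
  have hcos_sum : Real.cos (a + c) ≤ Real.cos α := by
    rw [Real.cos_add, hca, hcc, hsa, hsc]
    exact hmain
  have hαac : α ≤ a + c := by
    by_contra hcon
    push_neg at hcon
    have := Real.cos_lt_cos_of_nonneg_of_le_pi (by linarith) (by linarith [Real.pi_pos]) hcon
    linarith
  have hcm : max (α - k) 0 ≤ c := by
    apply max_le <;> linarith
  have htcos : t ≤ Real.cos (max (α - k) 0) := by
    rw [← hcc]
    apply Real.cos_le_cos_of_nonneg_of_le_pi (le_max_right _ _) (by linarith [Real.pi_pos]) hcm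
  have hcosm0 : 0 ≤ Real.cos (max (α - k) 0) := le_trans htnn htcos
  rw [hfid2]
  nlinarith

end Helper


open Real in
/-- Lower continuity bound for two-qubit geometric entanglement:
if `G(ρ) = sin²α` and `F(ρ,ρ') ≥ cos²k` then `G(ρ') ≥ sin²(max{α−k,0})`. -/
theorem geometric_lower_continuity (ρ ρ' : Q2) (hρ : IsDensity ρ) (hρ' : IsDensity ρ')
    (α k : ℝ) (hα : α ∈ Set.Icc 0 (π / 4)) (hk : k ∈ Set.Icc 0 (π / 2))
    (hG : G2 ρ = Real.sin α ^ 2) (hf : Real.cos k ^ 2 ≤ fid ρ ρ') :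
    Real.sin (max (α - k) 0) ^ 2 ≤ G2 ρ' := by
  obtain ⟨hα0, hα1⟩ := hα
  obtain ⟨hk0, hk1⟩ := hk
  set S : Set ℝ := {x : ℝ | ∃ σ, SepState σ ∧ x = fid ρ σ} with hS
  have hSbdd : BddAbove S := by
    refine ⟨1, fun x hx => ?_⟩
    obtain ⟨σ, hσ, rfl⟩ := hx
    exact Helper.fid_le_one hρ (Helper.sep_isDensity hσ)
  have hsup : sSup S = Real.cos α ^ 2 := by
    have hGdef : G2 ρ = 1 - sSup S := rfl
    rw [hGdef] at hG
    nlinarith [Real.sin_sq_add_cos_sq α]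
  have hfidσ : ∀ σ', SepState σ' → fid ρ σ' ≤ Real.cos α ^ 2 := by
    intro σ' hσ'
    rw [← hsup]
    exact le_csSup hSbdd ⟨σ', hσ', rfl⟩
  have hGoal : ∀ x ∈ {x : ℝ | ∃ σ, SepState σ ∧ x = fid ρ' σ},
      x ≤ Real.cos (max (α - k) 0) ^ 2 := by
    rintro x ⟨σ, hσ, rfl⟩
    exact Helper.main_bound ρ ρ' hρ hρ' α k hα0 hα1 hk0 hk1 hf hσ (hfidσ σ hσ)
  have hsup' : sSup {x : ℝ | ∃ σ, SepState σ ∧ x = fid ρ' σ}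
      ≤ Real.cos (max (α - k) 0) ^ 2 :=
    Real.sSup_le hGoal (sq_nonneg _)
  have hGdef' : G2 ρ' = 1 - sSup {x : ℝ | ∃ σ, SepState σ ∧ x = fid ρ' σ} := rfl
  rw [hGdef']
  nlinarith [Real.sin_sq_add_cos_sq (max (α - k) 0)]
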